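/- Let G be a finite 2-qBMG with color classes U and W, and let Γ be a subgroup of Aut_I(G). Then the Γ-quotient G/Γ is again a 2-qBMG. -/

import Mathlib

/-- Two vertices are equivalent (`x ∼̇ y`) if they have the same
out-neighbors and the same in-neighbors. -/
def dotSim {V : Type*} (E : V → V → Prop) (x y : V) : Prop :=
  (∀ z, E x z ↔ E y z) ∧ (∀ z, E z x ↔ E z y)

/-- `U` and `W` are the color classes of a 2-colored digraph with edge relation `E`:
they partition the vertex set and every edge has one endpoint in each class. -/
def IsTwoColored {V : Type*} (E : V → V → Prop) (U W : Set V) : Prop :=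
  (∀ v, v ∈ U ∨ v ∈ W) ∧ (∀ v, ¬(v ∈ U ∧ v ∈ W)) ∧
    ∀ u v, E u v → (u ∈ U ∧ v ∈ W) ∨ (u ∈ W ∧ v ∈ U)

/-- Axiom (N1). -/
def AxN1 {V : Type*} (E : V → V → Prop) : Prop :=
  ∀ u v, u ≠ v → ¬E u v → ¬E v u → ∀ w t, ¬(E u t ∧ E v w ∧ E t w)

/-- Axiom (N2): bi-transitivity. -/
def AxN2 {V : Type*} (E : V → V → Prop) : Prop :=
  ∀ u v w t, E u v → E v w → E w t → E u t

/-- Axiom (N3). -/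
def AxN3 {V : Type*} (E : V → V → Prop) : Prop :=
  ∀ u v w, E u w → E v w → (∀ z, E u z → E v z) ∨ (∀ z, E v z → E u z)

/-- A 2-qBMG: an irreflexive 2-colored digraph satisfying (N1), (N2), (N3). -/
def IsQBMG {V : Type*} (E : V → V → Prop) (U W : Set V) : Prop :=
  (∀ v, ¬E v v) ∧ IsTwoColored E U W ∧ AxN1 E ∧ AxN2 E ∧ AxN3 E

/-- An automorphism of the digraph: a permutation mapping edges to edges. -/
def IsAut {V : Type*} (E : V → V → Prop) (π : Equiv.Perm V) : Prop :=
  ∀ u v, E u v → E (π u) (π v)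

/-- A color-preserving automorphism of the 2-colored digraph. -/
def IsAutI {V : Type*} (E : V → V → Prop) (U W : Set V) (π : Equiv.Perm V) : Prop :=
  IsAut E π ∧ (∀ v ∈ U, π v ∈ U) ∧ (∀ v ∈ W, π v ∈ W)

/-- The setoid on the vertex set whose classes are the `Γ`-orbits,
for a subgroup `Γ` of the permutation group of the vertices. -/
def orbSetoid {V : Type*} (Γ : Subgroup (Equiv.Perm V)) : Setoid V where
  r x y := ∃ g ∈ Γ, g x = y
  iseqv := by
    constructor
    · exact fun x => ⟨1, Γ.one_mem, rfl⟩
    · rintro x y ⟨g, hg, rfl⟩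
      exact ⟨g⁻¹, Γ.inv_mem hg, by simp⟩
    · rintro x y z ⟨g, hg, rfl⟩ ⟨h, hh, rfl⟩
      exact ⟨h * g, Γ.mul_mem hh hg, Equiv.Perm.mul_apply h g x⟩

section QBMGaux

variable {V : Type*} {E : V → V → Prop} {U W : Set V} {Γ : Subgroup (Equiv.Perm V)}

lemma aut_edge (hΓ : ∀ g ∈ Γ, IsAutI E U W g) {g : Equiv.Perm V} (hg : g ∈ Γ)
    {x y : V} (h : E x y) : E (g x) (g y) := (hΓ g hg).1 x y h

lemma orb_mk_apply {g : Equiv.Perm V} (hg : g ∈ Γ) (x : V) :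
    Quotient.mk (orbSetoid Γ) (g x) = Quotient.mk (orbSetoid Γ) x :=
  Quotient.sound ⟨g⁻¹, Γ.inv_mem hg, by simp⟩

lemma qedge_iff (hΓ : ∀ g ∈ Γ, IsAutI E U W g) (x y : V) :
    (∃ x' y', E x' y' ∧ Quotient.mk (orbSetoid Γ) x' = Quotient.mk (orbSetoid Γ) x
      ∧ Quotient.mk (orbSetoid Γ) y' = Quotient.mk (orbSetoid Γ) y)
    ↔ ∃ g ∈ Γ, E x (g y) := by
  constructor
  · rintro ⟨x', y', hE, hx, hy⟩
    obtain ⟨g, hg, hgx⟩ := Quotient.exact hx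
    obtain ⟨h, hh, hhy⟩ := Quotient.exact hy
    refine ⟨g * h⁻¹, Γ.mul_mem hg (Γ.inv_mem hh), ?_⟩
    have := aut_edge hΓ hg hE
    rw [hgx] at this
    have hy' : y' = h⁻¹ y := by rw [← hhy]; simp
    rw [hy'] at this
    simpa [Equiv.Perm.mul_apply] using this
  · rintro ⟨g, hg, hE⟩
    exact ⟨x, g y, hE, rfl, orb_mk_apply hg y⟩

lemma memU_iff (hΓ : ∀ g ∈ Γ, IsAutI E U W g) (hTC : IsTwoColored E U W) (x : V) :
    (∃ x' ∈ U, Quotient.mk (orbSetoid Γ) x' = Quotient.mk (orbSetoid Γ) x) ↔ x ∈ U := by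
  constructor
  · rintro ⟨x', hx', hq⟩
    obtain ⟨g, hg, hgx⟩ := Quotient.exact hq
    rw [← hgx]
    exact (hΓ g hg).2.1 x' hx'
  · intro hx; exact ⟨x, hx, rfl⟩

lemma memW_iff (hΓ : ∀ g ∈ Γ, IsAutI E U W g) (hTC : IsTwoColored E U W) (x : V) :
    (∃ x' ∈ W, Quotient.mk (orbSetoid Γ) x' = Quotient.mk (orbSetoid Γ) x) ↔ x ∈ W := by
  constructor
  · rintro ⟨x', hx', hq⟩
    obtain ⟨g, hg, hgx⟩ := Quotient.exact hq
    rw [← hgx]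
    exact (hΓ g hg).2.2 x' hx'
  · intro hx; exact ⟨x, hx, rfl⟩

end QBMGaux

/-- If `G` is a finite 2-qBMG with color classes `U`, `W` and `Γ` is a
subgroup of `Aut_I(G)` (a subgroup of the permutation group all of whose elements are
color-preserving automorphisms), then the `Γ`-quotient `G/Γ` — whose vertices are the
`Γ`-orbits, whose color classes are the orbits contained in `U` resp. `W`, and whose
edges are induced by the edges of `G` — is again a 2-qBMG. -/
theorem stmt_0 {V : Type*} [Fintype V] [DecidableEq V] (E : V → V → Prop) (U W : Set V)
    (hG : IsQBMG E U W) (Γ : Subgroup (Equiv.Perm V)) (hΓ : ∀ g ∈ Γ, IsAutI E U W g) :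
    IsQBMG
      (fun a b : Quotient (orbSetoid Γ) =>
        ∃ x y : V, E x y ∧ Quotient.mk (orbSetoid Γ) x = a ∧ Quotient.mk (orbSetoid Γ) y = b)
      {a : Quotient (orbSetoid Γ) | ∃ x ∈ U, Quotient.mk (orbSetoid Γ) x = a}
      {a : Quotient (orbSetoid Γ) | ∃ x ∈ W, Quotient.mk (orbSetoid Γ) x = a} := by

  obtain ⟨hIrr, hTC, hN1, hN2, hN3⟩ := hG
  set S := orbSetoid Γ with hS
  refine ⟨?_, ⟨?_, ?_, ?_⟩, ?_, ?_, ?_⟩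
  · -- irreflexive
    rintro a ⟨x, y, hE, hx, hy⟩
    rw [← hy] at hx
    obtain ⟨g, hg, hgx⟩ := Quotient.exact hx
    have hcol := hTC.2.2 x y hE
    have hxyU : x ∈ U → y ∈ U := fun h => hgx ▸ (hΓ g hg).2.1 x h
    have hxyW : x ∈ W → y ∈ W := fun h => hgx ▸ (hΓ g hg).2.2 x h
    rcases hcol with ⟨hxU, hyW⟩ | ⟨hxW, hyU⟩
    · exact hTC.2.1 y ⟨hxyU hxU, hyW⟩
    · exact hTC.2.1 y ⟨hyU, hxyW hxW⟩
  · -- every vertex in U' or W'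
    intro a
    induction a using Quotient.inductionOn with
    | h x =>
      rcases hTC.1 x with hx | hx
      · exact Or.inl ⟨x, hx, rfl⟩
      · exact Or.inr ⟨x, hx, rfl⟩
  · -- disjoint
    intro a
    induction a using Quotient.inductionOn with
    | h x =>
      rintro ⟨h1, h2⟩
      exact hTC.2.1 x ⟨(memU_iff hΓ hTC x).mp h1, (memW_iff hΓ hTC x).mp h2⟩
  · -- edges between classes
    rintro a b ⟨x, y, hE, hx, hy⟩
    subst hx; subst hy
    rcases hTC.2.2 x y hE with ⟨hxU, hyW⟩ | ⟨hxW, hyU⟩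
    · exact Or.inl ⟨⟨x, hxU, rfl⟩, ⟨y, hyW, rfl⟩⟩
    · exact Or.inr ⟨⟨x, hxW, rfl⟩, ⟨y, hyU, rfl⟩⟩
  · -- N1
    intro a b hab hnab hnba c d hcon
    obtain ⟨⟨u, rfl⟩, ⟨v, rfl⟩, ⟨w, rfl⟩, ⟨t, rfl⟩⟩ :
        (∃ u, Quotient.mk S u = a) ∧ (∃ v, Quotient.mk S v = b) ∧
        (∃ w, Quotient.mk S w = c) ∧ (∃ t, Quotient.mk S t = d) :=
      ⟨Quotient.exists_rep a, Quotient.exists_rep b, Quotient.exists_rep c,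
        Quotient.exists_rep d⟩
    obtain ⟨h1, h2, h3⟩ := hcon
    obtain ⟨ga, hga, hE1⟩ := (qedge_iff hΓ u t).mp h1
    obtain ⟨gb, hgb, hE2⟩ := (qedge_iff hΓ v w).mp h2
    obtain ⟨gc, hgc, hE3⟩ := (qedge_iff hΓ t w).mp h3
    -- u'' = (gb * gc⁻¹ * ga⁻¹) u, t'' = (gb * gc⁻¹) t
    set k : Equiv.Perm V := gb * gc⁻¹ * ga⁻¹ with hk
    have hkΓ : k ∈ Γ := Γ.mul_mem (Γ.mul_mem hgb (Γ.inv_mem hgc)) (Γ.inv_mem hga)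
    set m : Equiv.Perm V := gb * gc⁻¹ with hm
    have hmΓ : m ∈ Γ := Γ.mul_mem hgb (Γ.inv_mem hgc)
    have e1 : E (k u) (m t) := by
      have := aut_edge hΓ hkΓ hE1
      have harg : k (ga t) = m t := by simp [hk, hm, Equiv.Perm.mul_apply]
      rwa [harg] at this
    have e3 : E (m t) (gb w) := by
      have := aut_edge hΓ hmΓ hE3
      have harg : m (gc w) = gb w := by simp [hm, Equiv.Perm.mul_apply]
      rwa [harg] at this
    have hne : k u ≠ v := by
      intro h
      apply hab
      rw [← orb_mk_apply hkΓ u, h]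
    have hnE1 : ¬ E (k u) v := fun h =>
      hnab ⟨k u, v, h, orb_mk_apply hkΓ u, rfl⟩
    have hnE2 : ¬ E v (k u) := fun h =>
      hnba ⟨v, k u, h, rfl, orb_mk_apply hkΓ u⟩
    exact hN1 (k u) v hne hnE1 hnE2 (gb w) (m t) ⟨e1, hE2, e3⟩
  · -- N2
    intro a b c d h1 h2 h3
    obtain ⟨u, rfl⟩ := Quotient.exists_rep a
    obtain ⟨v, rfl⟩ := Quotient.exists_rep b
    obtain ⟨w, rfl⟩ := Quotient.exists_rep c
    obtain ⟨t, rfl⟩ := Quotient.exists_rep d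
    obtain ⟨ga, hga, hE1⟩ := (qedge_iff hΓ u v).mp h1
    obtain ⟨gb, hgb, hE2⟩ := (qedge_iff hΓ v w).mp h2
    obtain ⟨gc, hgc, hE3⟩ := (qedge_iff hΓ w t).mp h3
    refine (qedge_iff hΓ u t).mpr ⟨ga * gb * gc, Γ.mul_mem (Γ.mul_mem hga hgb) hgc, ?_⟩
    have e2 : E (ga v) ((ga * gb) w) := by
      have := aut_edge hΓ hga hE2
      simpa [Equiv.Perm.mul_apply] using this
    have e3 : E ((ga * gb) w) ((ga * gb * gc) t) := by
      have := aut_edge hΓ (Γ.mul_mem hga hgb) hE3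
      simpa [Equiv.Perm.mul_apply] using this
    exact hN2 u (ga v) ((ga * gb) w) ((ga * gb * gc) t) hE1 e2 e3
  · -- N3
    intro a b c h1 h2
    obtain ⟨u, rfl⟩ := Quotient.exists_rep a
    obtain ⟨v, rfl⟩ := Quotient.exists_rep b
    obtain ⟨w, rfl⟩ := Quotient.exists_rep c
    obtain ⟨ga, hga, hE1⟩ := (qedge_iff hΓ u w).mp h1
    obtain ⟨gb, hgb, hE2⟩ := (qedge_iff hΓ v w).mp h2
    set m : Equiv.Perm V := gb * ga⁻¹ with hm
    have hmΓ : m ∈ Γ := Γ.mul_mem hgb (Γ.inv_mem hga)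
    have e1 : E (m u) (gb w) := by
      have := aut_edge hΓ hmΓ hE1
      have harg : m (ga w) = gb w := by simp [hm, Equiv.Perm.mul_apply]
      rwa [harg] at this
    rcases hN3 (m u) v (gb w) e1 hE2 with hc | hc
    · refine Or.inl ?_
      intro z hz
      obtain ⟨z₀, rfl⟩ := Quotient.exists_rep z
      obtain ⟨gk, hgk, hEk⟩ := (qedge_iff hΓ u z₀).mp hz
      have : E (m u) ((m * gk) z₀) := by
        have := aut_edge hΓ hmΓ hEk
        simpa [Equiv.Perm.mul_apply] using this
      exact (qedge_iff hΓ v z₀).mpr ⟨m * gk, Γ.mul_mem hmΓ hgk, hc _ this⟩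
    · refine Or.inr ?_
      intro z hz
      obtain ⟨z₀, rfl⟩ := Quotient.exists_rep z
      obtain ⟨gk, hgk, hEk⟩ := (qedge_iff hΓ v z₀).mp hz
      have h' : E (m u) (gk z₀) := hc _ hEk
      have : E u ((m⁻¹ * gk) z₀) := by
        have := aut_edge hΓ (Γ.inv_mem hmΓ) h'
        simpa [Equiv.Perm.mul_apply] using this
      exact (qedge_iff hΓ u z₀).mpr ⟨m⁻¹ * gk, Γ.mul_mem (Γ.inv_mem hmΓ) hgk, this⟩
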